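/- For every g ∈ SL₃(ℂ) and every z ∈ X_ℂ, the matrix g·z = (g z² g*)^{1/2} again belongs to X_ℂ, and for all x, y ∈ X_ℂ one has d_ℂ(g·x, g·y) = d_ℂ(x, y); that is, SL₃(ℂ) acts on X_ℂ by isometries for the distance d_ℂ. -/

import Mathlib

open Matrix
open scoped ComplexOrder

noncomputable section
open scoped Classical

/-- Operator norm of a complex matrix acting on `ℂⁿ` with the ℓ² norm. -/
def opN {n : ℕ} (M : Matrix (Fin n) (Fin n) ℂ) : ℝ :=
  ‖Matrix.toEuclideanCLM (𝕜 := ℂ) M‖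

/-- The distance `d(x,y) = log‖x⁻¹y‖ + log‖y⁻¹x‖`. -/
def dX {n : ℕ} (x y : Matrix (Fin n) (Fin n) ℂ) : ℝ :=
  Real.log (opN (x⁻¹ * y)) + Real.log (opN (y⁻¹ * x))

/-- The action `g·z = (g z² g*)^{1/2}` (the unique positive semidefinite square root). -/
def act {n : ℕ} (g z : Matrix (Fin n) (Fin n) ℂ) : Matrix (Fin n) (Fin n) ℂ :=
  if h : (g * z ^ 2 * gᴴ).PosSemidef then
    (h.1.eigenvectorUnitary : Matrix (Fin n) (Fin n) ℂ) *
      Matrix.diagonal (fun i => ((Real.sqrt (h.1.eigenvalues i) : ℝ) : ℂ)) *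
      (star h.1.eigenvectorUnitary : Matrix (Fin n) (Fin n) ℂ)
  else 0

/-- `X_ℂ`: Hermitian positive definite complex 3×3 matrices of determinant 1. -/
def XC : Set (Matrix (Fin 3) (Fin 3) ℂ) :=
  {x | x.IsHermitian ∧ x.PosDef ∧ x.det = 1}

/-- The matrix `J` with blocks `[[0, -I],[I, 0]]`. -/
def J6 : Matrix (Fin 6) (Fin 6) ℂ :=
  Matrix.reindex finSumFinEquiv finSumFinEquiv
    (Matrix.fromBlocks 0 (-1) 1 0 : Matrix (Fin 3 ⊕ Fin 3) (Fin 3 ⊕ Fin 3) ℂ)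

/-- A 6×6 complex matrix is quaternionic if `J M J⁻¹ = M̄`. -/
def IsQuat (M : Matrix (Fin 6) (Fin 6) ℂ) : Prop :=
  J6 * M * J6⁻¹ = M.map star

/-- `X_ℍ`: quaternionic Hermitian positive definite 6×6 matrices of determinant 1. -/
def XH : Set (Matrix (Fin 6) (Fin 6) ℂ) :=
  {x | IsQuat x ∧ x.IsHermitian ∧ x.PosDef ∧ x.det = 1}

/-- `A_ℍ`: diagonal matrices in `X_ℍ`. -/
def AH : Set (Matrix (Fin 6) (Fin 6) ℂ) :=
  {x | x ∈ XH ∧ x.IsDiag}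

/-- first complex component of a quaternionic matrix, `M = M₁ + M₂ j`. -/
def c1 (M : Matrix (Fin 3) (Fin 3) (Quaternion ℝ)) : Matrix (Fin 3) (Fin 3) ℂ :=
  fun i j => ⟨(M i j).re, (M i j).imI⟩

/-- second complex component of a quaternionic matrix, `M = M₁ + M₂ j`. -/
def c2 (M : Matrix (Fin 3) (Fin 3) (Quaternion ℝ)) : Matrix (Fin 3) (Fin 3) ℂ :=
  fun i j => ⟨(M i j).imJ, (M i j).imK⟩

/-- The embedding `ι : M₃(ℍ) → M₆(ℂ)`, `M = M₁ + M₂ j ↦ [[M₁, -M̄₂],[M₂, M̄₁]]`. -/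
def iota (M : Matrix (Fin 3) (Fin 3) (Quaternion ℝ)) : Matrix (Fin 6) (Fin 6) ℂ :=
  Matrix.reindex finSumFinEquiv finSumFinEquiv
    (Matrix.fromBlocks (c1 M) (-((c2 M).map star)) (c2 M) ((c1 M).map star))

/- ### Auxiliary lemmas -/

def Matrix.PosSemidef.sqrt {n : ℕ} {A : Matrix (Fin n) (Fin n) ℂ} (h : A.PosSemidef) :
    Matrix (Fin n) (Fin n) ℂ :=
  (h.1.eigenvectorUnitary : Matrix (Fin n) (Fin n) ℂ) *
      Matrix.diagonal (fun i => ((Real.sqrt (h.1.eigenvalues i) : ℝ) : ℂ)) *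
      (star h.1.eigenvectorUnitary : Matrix (Fin n) (Fin n) ℂ)

lemma Matrix.PosSemidef.sqrt_mul_self {n : ℕ} {A : Matrix (Fin n) (Fin n) ℂ} (h : A.PosSemidef) :
    h.sqrt * h.sqrt = A := by
  conv_rhs => rw [h.1.spectral_theorem, Unitary.conjStarAlgAut_apply]
  rw [Matrix.PosSemidef.sqrt]
  simp only [Matrix.mul_assoc]
  rw [← Matrix.mul_assoc (star _ : Matrix (Fin n) (Fin n) ℂ) (h.1.eigenvectorUnitary : Matrix (Fin n) (Fin n) ℂ),
    Unitary.coe_star_mul_self, Matrix.one_mul, ← Matrix.mul_assoc (diagonal _),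
    diagonal_mul_diagonal]
  congr 3
  ext i
  simp only [Function.comp_apply]
  rw [← Complex.ofReal_mul, Real.mul_self_sqrt (h.eigenvalues_nonneg i)]
  rfl

lemma Matrix.PosSemidef.posSemidef_sqrt {n : ℕ} {A : Matrix (Fin n) (Fin n) ℂ} (h : A.PosSemidef) :
    h.sqrt.PosSemidef := by
  have hd : (Matrix.diagonal (fun i => ((Real.sqrt (h.1.eigenvalues i) : ℝ) : ℂ))).PosSemidef := by
    rw [posSemidef_diagonal_iff]
    intro i
    exact_mod_cast Real.sqrt_nonneg _
  have := hd.mul_mul_conjTranspose_same (h.1.eigenvectorUnitary : Matrix (Fin n) (Fin n) ℂ)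
  rwa [← Matrix.star_eq_conjTranspose, ← Unitary.coe_star] at this


lemma aux_posDef_of_posSemidef_det_ne_zero {m : Type*} [Fintype m] [DecidableEq m]
    {A : Matrix m m ℂ} (hA : A.PosSemidef) (hdet : A.det ≠ 0) : A.PosDef := by
  exact hA.posDef_iff_det_ne_zero.mpr hdet

lemma aux_opN_nonneg {n : ℕ} (M : Matrix (Fin n) (Fin n) ℂ) : 0 ≤ opN M :=
  norm_nonneg _

lemma aux_opN_sq {n : ℕ} (M : Matrix (Fin n) (Fin n) ℂ) : opN (Mᴴ * M) = opN M ^ 2 := by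
  have h : Mᴴ * M = star M * M := by rw [Matrix.star_eq_conjTranspose]
  rw [opN, opN, h, _root_.map_mul, StarHomClass.map_star,
    CStarRing.norm_star_mul_self (x := Matrix.toEuclideanCLM (𝕜 := ℂ) M), sq]

lemma aux_opN_eq_of_spectrum {n : ℕ} {M N : Matrix (Fin n) (Fin n) ℂ}
    (hM : M.IsHermitian) (hN : N.IsHermitian) (h : spectrum ℂ M = spectrum ℂ N) :
    opN M = opN N := by
  have hsM : IsSelfAdjoint (Matrix.toEuclideanCLM (𝕜 := ℂ) M) := by
    rw [_root_.IsSelfAdjoint, ← StarHomClass.map_star]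
    exact congrArg _ (by rw [Matrix.star_eq_conjTranspose, hM.eq])
  have hsN : IsSelfAdjoint (Matrix.toEuclideanCLM (𝕜 := ℂ) N) := by
    rw [_root_.IsSelfAdjoint, ← StarHomClass.map_star]
    exact congrArg _ (by rw [Matrix.star_eq_conjTranspose, hN.eq])
  have hspec : ∀ (P : Matrix (Fin n) (Fin n) ℂ),
      spectrum ℂ (Matrix.toEuclideanCLM (𝕜 := ℂ) P) = spectrum ℂ P := fun P =>
    AlgEquiv.spectrum_eq _ _
  have key : (‖Matrix.toEuclideanCLM (𝕜 := ℂ) M‖₊ : ENNReal)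
      = (‖Matrix.toEuclideanCLM (𝕜 := ℂ) N‖₊ : ENNReal) := by
    rw [← hsM.spectralRadius_eq_nnnorm, ← hsN.spectralRadius_eq_nnnorm]
    simp only [spectralRadius, hspec, h]
  have key2 := ENNReal.coe_injective key
  rw [opN, opN, ← coe_nnnorm, ← coe_nnnorm, key2]

lemma aux_spectrum_conj {m : Type*} [Fintype m] [DecidableEq m] {b : Matrix m m ℂ}
    (c : Matrix m m ℂ) (hb : IsUnit b) :
    spectrum ℂ (b * c * b⁻¹) = spectrum ℂ c := by
  have h1 : ((hb.unit⁻¹ : (Matrix m m ℂ)ˣ) : Matrix m m ℂ) = b⁻¹ := by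
    rw [Matrix.coe_units_inv, hb.unit_spec]
  have h2 := spectrum.units_conjugate (R := ℂ) (a := c) (u := hb.unit)
  rwa [h1, hb.unit_spec] at h2

lemma aux_spectrum_conj' {m : Type*} [Fintype m] [DecidableEq m] {b : Matrix m m ℂ}
    (c : Matrix m m ℂ) (hb : IsUnit b) :
    spectrum ℂ (b⁻¹ * c * b) = spectrum ℂ c := by
  have h1 : ((hb.unit⁻¹ : (Matrix m m ℂ)ˣ) : Matrix m m ℂ) = b⁻¹ := by
    rw [Matrix.coe_units_inv, hb.unit_spec]
  have h2 := spectrum.units_conjugate' (R := ℂ) (a := c) (u := hb.unit)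
  rwa [h1, hb.unit_spec] at h2

/-- The key invariance: if `a² = g x² gᴴ` and `b² = g y² gᴴ`
then `‖a⁻¹ b‖ = ‖x⁻¹ y‖`. -/
lemma aux_opN_invariance {g a b x y : Matrix (Fin 3) (Fin 3) ℂ}
    (hgu : IsUnit g.det)
    (ha : a.PosDef) (hb : b.PosDef) (hx : x.PosDef) (hy : y.PosDef)
    (haa : a * a = g * (x * x) * gᴴ) (hbb : b * b = g * (y * y) * gᴴ) :
    opN (a⁻¹ * b) = opN (x⁻¹ * y) := by
  have hbu : IsUnit b.det := hb.det_pos.ne'.isUnit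
  have hyu : IsUnit y.det := hy.det_pos.ne'.isUnit
  have hgH : IsUnit (gᴴ : Matrix (Fin 3) (Fin 3) ℂ).det := by
    rw [Matrix.det_conjTranspose]
    exact hgu.star
  -- identity 1
  have e1 : (a⁻¹ * b)ᴴ * (a⁻¹ * b) = b * (a⁻¹ * a⁻¹ * (b * b)) * b⁻¹ := by
    have hbinv : b * b⁻¹ = 1 := Matrix.mul_nonsing_inv b hbu
    rw [Matrix.conjTranspose_mul, ha.isHermitian.inv.eq, hb.isHermitian.eq]
    simp only [Matrix.mul_assoc, hbinv, Matrix.mul_one]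
  -- identity 2
  have e2 : a⁻¹ * a⁻¹ * (b * b) = (gᴴ)⁻¹ * (x⁻¹ * x⁻¹ * (y * y)) * gᴴ := by
    rw [← Matrix.mul_inv_rev, haa, hbb]
    simp only [Matrix.mul_inv_rev, Matrix.mul_assoc, Matrix.nonsing_inv_mul_cancel_left _ _ hgu]
  -- identity 3
  have e3 : (x⁻¹ * y)ᴴ * (x⁻¹ * y) = y * (x⁻¹ * x⁻¹ * (y * y)) * y⁻¹ := by
    have hyinv : y * y⁻¹ = 1 := Matrix.mul_nonsing_inv y hyu
    rw [Matrix.conjTranspose_mul, hx.isHermitian.inv.eq, hy.isHermitian.eq]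
    simp only [Matrix.mul_assoc, hyinv, Matrix.mul_one]
  have hspec : spectrum ℂ ((a⁻¹ * b)ᴴ * (a⁻¹ * b)) = spectrum ℂ ((x⁻¹ * y)ᴴ * (x⁻¹ * y)) := by
    rw [e1, e3, aux_spectrum_conj _ (hy.isUnit), aux_spectrum_conj _ (hb.isUnit), e2,
      aux_spectrum_conj' _ ((Matrix.isUnit_iff_isUnit_det _).mpr hgH)]
  have hsq : opN (a⁻¹ * b) ^ 2 = opN (x⁻¹ * y) ^ 2 := by
    rw [← aux_opN_sq, ← aux_opN_sq]
    exact aux_opN_eq_of_spectrum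
      (Matrix.posSemidef_conjTranspose_mul_self _).isHermitian
      (Matrix.posSemidef_conjTranspose_mul_self _).isHermitian hspec
  have h1 := aux_opN_nonneg (a⁻¹ * b)
  have h2 := aux_opN_nonneg (x⁻¹ * y)
  nlinarith [hsq, h1, h2]

/-- Specification of the action: `act g z` is positive definite with determinant 1
and squares to `g z² gᴴ`. -/
lemma aux_act_spec (g : Matrix (Fin 3) (Fin 3) ℂ) (hg : g.det = 1)
    {z : Matrix (Fin 3) (Fin 3) ℂ} (hz : z ∈ XC) :
    (act g z).PosDef ∧ (act g z).det = 1 ∧ act g z * act g z = g * (z * z) * gᴴ := by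
  obtain ⟨hzh, hzp, hzdet⟩ := hz
  have hz2 : (z ^ 2).PosSemidef := hzp.posSemidef.pow 2
  have hps : (g * z ^ 2 * gᴴ).PosSemidef := hz2.mul_mul_conjTranspose_same g
  have hact : act g z = hps.sqrt := dif_pos hps
  have hdet : (g * z ^ 2 * gᴴ).det = 1 := by
    rw [Matrix.det_mul, Matrix.det_mul, Matrix.det_conjTranspose, Matrix.det_pow, hg, hzdet]
    simp
  have hs2 : hps.sqrt * hps.sqrt = g * z ^ 2 * gᴴ := hps.sqrt_mul_self
  have hsdet2 : hps.sqrt.det * hps.sqrt.det = 1 := by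
    rw [← Matrix.det_mul, hs2, hdet]
  have hsd : hps.sqrt.det ≠ 0 := by
    intro h
    rw [h, zero_mul] at hsdet2
    exact zero_ne_one hsdet2
  have hsp : hps.sqrt.PosDef := aux_posDef_of_posSemidef_det_ne_zero hps.posSemidef_sqrt hsd
  have hdet1 : hps.sqrt.det = 1 := by
    rcases mul_self_eq_one_iff.mp hsdet2 with h | h
    · exact h
    · exfalso
      have hpos := hsp.det_pos
      rw [h] at hpos
      rw [Complex.lt_def] at hpos
      simp at hpos
      norm_num at hpos
  refine ⟨?_, ?_, ?_⟩
  · rw [hact]; exact hsp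
  · rw [hact]; exact hdet1
  · rw [hact, hs2, pow_two]

/-- For `g ∈ SL₃(ℂ)`, the action `g·z = (g z² g*)^{1/2}` maps `X_ℂ` to itself and
is isometric for the distance `d_ℂ`. -/
theorem SL3C_acts_isometrically (g : Matrix (Fin 3) (Fin 3) ℂ) (hg : g.det = 1) :
    (∀ z ∈ XC, act g z ∈ XC) ∧
    (∀ x ∈ XC, ∀ y ∈ XC, dX (act g x) (act g y) = dX x y) := by
  constructor
  · intro z hz
    obtain ⟨hp, hd, _⟩ := aux_act_spec g hg hz
    exact ⟨hp.isHermitian, hp, hd⟩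
  · intro x hx y hy
    obtain ⟨hap, _, haa⟩ := aux_act_spec g hg hx
    obtain ⟨hbp, _, hbb⟩ := aux_act_spec g hg hy
    have hgu : IsUnit g.det := by rw [hg]; exact isUnit_one
    have hxp : x.PosDef := hx.2.1
    have hyp : y.PosDef := hy.2.1
    rw [dX, dX,
      aux_opN_invariance hgu hap hbp hxp hyp haa hbb,
      aux_opN_invariance hgu hbp hap hyp hxp hbb haa]

end
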